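/- Let φ : [0,∞) → [0,∞) be an increasing, continuous function and ν ∈ (0,1]. Suppose the variational inequality ⟨x†, x⟩ ≤ C·‖φ(L*L)x‖^ν·‖x‖^{1−ν} holds for all x ∈ X with some constant C > 0. Then for every continuous function ψ : [0,∞) → [0,∞) for which there exist constants c > 0 and μ ∈ (0,ν) with ψ(λ) ≥ c·φ(λ)^μ for all λ ≥ 0, the minimum-norm solution satisfies x† ∈ range(ψ(L*L)). (Second part of Corollary 4.2.) -/

import Mathlib

open MeasureTheory RealInnerProductSpace Filter

lemma slice_solve {X : Type*} [NormedAddCommGroup X] [InnerProductSpace ℝ X] [CompleteSpace X]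
    (P A : X →L[ℝ] X)
    (hcomm : ∀ u, A (P u) = P (A u))
    (hA_sa : ∀ u v : X, ⟪A u, v⟫ = ⟪u, A v⟫)
    (c' : ℝ) (hc' : 0 < c')
    (hlb : ∀ u : X, P u = u → c' * ‖u‖ ≤ ‖A u‖)
    (v : X) (hv : P v = v) : ∃ w : X, A w = v ∧ c' * ‖w‖ ≤ ‖v‖ := by
  set Q : X →L[ℝ] X := ContinuousLinearMap.id ℝ X - P with hQ
  set M : Submodule ℝ X := LinearMap.ker (Q : X →ₗ[ℝ] X) with hM
  have hmem : ∀ u : X, u ∈ M ↔ P u = u := by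
    intro u
    constructor
    · intro h
      have h1 : Q u = 0 := h
      have h2 : u - P u = 0 := h1
      exact (sub_eq_zero.mp h2).symm
    · intro h
      show Q u = 0
      show u - P u = 0
      rw [h, sub_self]
  have hMclosed : IsClosed (M : Set X) := by
    have h : (M : Set X) = Q ⁻¹' {0} := by
      ext u; simp [hM, LinearMap.mem_ker]
    rw [h]
    exact isClosed_singleton.preimage Q.continuous
  haveI : CompleteSpace M := hMclosed.completeSpace_coe
  have hmapmem : ∀ u : X, u ∈ M → A u ∈ M := by
    intro u hu
    rw [hmem]
    rw [← hcomm]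
    exact congrArg A ((hmem u).mp hu)
  let T : M →L[ℝ] M := (A.comp M.subtypeL).codRestrict M (fun u => hmapmem u u.2)
  have hTapp : ∀ u : M, (T u : X) = A u := fun u => rfl
  have hTlb : ∀ u : M, c' * ‖u‖ ≤ ‖T u‖ := by
    intro u
    have := hlb u ((hmem u).mp u.2)
    simpa [hTapp] using this
  have hanti : AntilipschitzWith ⟨c'⁻¹, by positivity⟩ T := by
    apply T.antilipschitz_of_bound
    intro x
    show ‖x‖ ≤ c'⁻¹ * ‖T x‖
    rw [inv_mul_eq_div, le_div_iff₀ hc', mul_comm]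
    exact hTlb x
  have hrange_closed : IsClosed (Set.range T) := hanti.isClosed_range T.uniformContinuous
  set R : Submodule ℝ M := LinearMap.range (T : M →ₗ[ℝ] M) with hR
  have hRset : (R : Set M) = Set.range T := by
    ext z; simp [hR, LinearMap.mem_range, Set.mem_range]
  haveI : CompleteSpace R := (hRset ▸ hrange_closed).completeSpace_coe
  have hTsa : ∀ u w : M, ⟪(T u : M), w⟫ = (⟪u, T w⟫ : ℝ) := by
    intro u w
    have h := hA_sa u w
    simpa [Submodule.coe_inner, hTapp] using h
  have hRorth : Rᗮ = ⊥ := by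
    rw [Submodule.eq_bot_iff]
    intro z hz
    have h1 : ∀ u : M, ⟪(T u : M), z⟫ = (0:ℝ) := fun u => hz (T u) (LinearMap.mem_range_self _ u)
    have h3 : ⟪(T z : M), T z⟫ = (0:ℝ) := (hTsa (T z) z).symm.trans (h1 (T z))
    have h2 : T z = 0 := inner_self_eq_zero.mp h3
    have h4 := hTlb z
    rw [h2, norm_zero] at h4
    have h5 : ‖z‖ ≤ 0 := by nlinarith [norm_nonneg z]
    exact norm_le_zero_iff.mp h5
  have hRtop : R = ⊤ := by
    calc R = Rᗮᗮ := (Submodule.orthogonal_orthogonal R).symm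
    _ = (⊥ : Submodule ℝ M)ᗮ := by rw [hRorth]
    _ = ⊤ := Submodule.bot_orthogonal_eq_top
  have hvM : v ∈ M := (hmem v).mpr hv
  obtain ⟨w, hw⟩ : ∃ w : M, T w = ⟨v, hvM⟩ := by
    have hmemR : (⟨v, hvM⟩ : M) ∈ R := hRtop ▸ Submodule.mem_top
    exact LinearMap.mem_range.mp hmemR
  refine ⟨w, ?_, ?_⟩
  · have := congrArg (Subtype.val) hw
    simpa [hTapp] using this
  · have h := hTlb w
    rw [hw] at h
    simpa using h

theorem statement16
    {X : Type*} [NormedAddCommGroup X] [InnerProductSpace ℝ X] [CompleteSpace X]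
    {Y : Type*} [NormedAddCommGroup Y] [InnerProductSpace ℝ Y] [CompleteSpace Y]
    (L : X →L[ℝ] Y) (y : Y) (xdag : X)
    (hsol : L xdag = y) (hmin : ∀ x : X, L x = y → ‖xdag‖ ≤ ‖x‖)
    (E : ℝ → X →L[ℝ] X)
    (hEsa : ∀ t : ℝ, ∀ u v : X, ⟪E t u, v⟫ = ⟪u, E t v⟫)
    (hEcomp : ∀ s t : ℝ, ∀ u : X, E s (E t u) = E (min s t) u)
    (hEtop : ∀ t : ℝ, ‖L‖ ^ 2 ≤ t → ∀ u : X, E t u = u)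
    (hE0dag : E 0 xdag = 0)
    (hEr : ∀ u : X, ∀ t : ℝ, Tendsto (fun s => E s u) (nhdsWithin t (Set.Ioi t)) (nhds (E t u)))
    (φ ψ : ℝ → ℝ) (hφmono : MonotoneOn φ (Set.Ici 0))
    (hφcont : ContinuousOn φ (Set.Ici 0)) (hφnn : ∀ t ∈ Set.Ici (0:ℝ), 0 ≤ φ t)
    (hψcont : ContinuousOn ψ (Set.Ici 0)) (hψnn : ∀ t ∈ Set.Ici (0:ℝ), 0 ≤ ψ t)
    (Aφ Aψ : X →L[ℝ] X)
    (hAφub : ∀ t ∈ Set.Ici (0:ℝ), ∀ x : X, ‖Aφ (E t x)‖ ≤ φ t * ‖E t x‖)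
    (hAψsa : ∀ u v : X, ⟪Aψ u, v⟫ = ⟪u, Aψ v⟫)
    (hAψcomm : ∀ t : ℝ, ∀ u : X, Aψ (E t u) = E t (Aψ u))
    (hAψlb : ∀ s t : ℝ, 0 ≤ s → s ≤ t → ∀ c : ℝ, (∀ u ∈ Set.Icc s t, c ≤ ψ u) →
      ∀ x : X, c * ‖E t x - E s x‖ ≤ ‖Aψ (E t x - E s x)‖)
    (ν : ℝ) (hν0 : 0 < ν) (hν1 : ν ≤ 1)
    (C : ℝ) (hC : 0 < C)
    (hvar : ∀ x : X, ⟪xdag, x⟫ ≤ C * ‖Aφ x‖ ^ ν * ‖x‖ ^ (1 - ν))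
    (c μ : ℝ) (hc : 0 < c) (hμ0 : 0 < μ) (hμν : μ < ν)
    (hψφ : ∀ t ∈ Set.Ici (0:ℝ), c * φ t ^ μ ≤ ψ t) :
    ∃ w : X, Aψ w = xdag := by
  classical
  set T : ℝ := ‖L‖ ^ 2 with hTdef
  have hT0 : (0:ℝ) ≤ T := sq_nonneg _
  have hETdag : E T xdag = xdag := hEtop T le_rfl xdag
  -- key spectral estimate
  have hkey : ∀ t : ℝ, 0 ≤ t → ‖E t xdag‖ ≤ C * φ t ^ ν := by
    intro t ht
    by_cases hz : E t xdag = 0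
    · rw [hz, norm_zero]
      exact mul_nonneg hC.le (Real.rpow_nonneg (hφnn t ht) ν)
    · set z := E t xdag with hzdef
      have hzpos : 0 < ‖z‖ := norm_pos_iff.mpr hz
      have h1 : ‖z‖ * ‖z‖ = ⟪xdag, z⟫ := by
        have e1 : ⟪E t xdag, E t xdag⟫ = (⟪xdag, E t (E t xdag)⟫ : ℝ) := hEsa t xdag (E t xdag)
        rw [hEcomp t t, min_self] at e1
        rw [← real_inner_self_eq_norm_mul_norm]
        exact e1
      have h2 := hvar z
      have h3 := hAφub t ht xdag
      have hφt : 0 ≤ φ t := hφnn t ht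
      have h4 : ‖Aφ z‖ ^ ν ≤ φ t ^ ν * ‖z‖ ^ ν := by
        rw [← Real.mul_rpow hφt (norm_nonneg _)]
        exact Real.rpow_le_rpow (norm_nonneg _) h3 hν0.le
      have h5 : ‖z‖ ^ ν * ‖z‖ ^ (1 - ν) = ‖z‖ := by
        rw [← Real.rpow_add hzpos, show ν + (1 - ν) = 1 by ring, Real.rpow_one]
      have h6 : ‖z‖ * ‖z‖ ≤ C * φ t ^ ν * ‖z‖ := by
        calc ‖z‖ * ‖z‖ = ⟪xdag, z⟫ := h1
        _ ≤ C * ‖Aφ z‖ ^ ν * ‖z‖ ^ (1 - ν) := h2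
        _ ≤ C * (φ t ^ ν * ‖z‖ ^ ν) * ‖z‖ ^ (1 - ν) := by
            apply mul_le_mul_of_nonneg_right (mul_le_mul_of_nonneg_left h4 hC.le)
              (Real.rpow_nonneg (norm_nonneg _) _)
        _ = C * φ t ^ ν * (‖z‖ ^ ν * ‖z‖ ^ (1 - ν)) := by ring
        _ = C * φ t ^ ν * ‖z‖ := by rw [h5]
      exact le_of_mul_le_mul_right h6 hzpos
  by_cases hbb : φ T ≤ 0
  · have hbT : φ T = 0 := le_antisymm hbb (hφnn T hT0)
    have h := hkey T hT0
    rw [hETdag, hbT, Real.zero_rpow hν0.ne', mul_zero] at h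
    have hx0 : xdag = 0 := norm_le_zero_iff.mp h
    exact ⟨0, by rw [map_zero, hx0]⟩
  push_neg at hbb
  set b : ℝ := φ T with hbdef
  set θ : ℕ → ℝ := fun n => b * (2:ℝ)⁻¹ ^ n with hθdef
  have hθpos : ∀ n, 0 < θ n := fun n => mul_pos hbb (by positivity)
  have hθsucc : ∀ n, θ (n + 1) = 2⁻¹ * θ n := by
    intro n; show b * (2:ℝ)⁻¹ ^ (n+1) = 2⁻¹ * (b * 2⁻¹ ^ n); rw [pow_succ]; ring
  have hθlt : ∀ n, θ (n + 1) < θ n := by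
    intro n; rw [hθsucc]; nlinarith [hθpos n]
  have hθleb : ∀ n, θ n ≤ b := by
    intro n
    have h1 : (2:ℝ)⁻¹ ^ n ≤ 1 := pow_le_one₀ (by norm_num) (by norm_num)
    calc θ n = b * (2:ℝ)⁻¹ ^ n := rfl
    _ ≤ b * 1 := mul_le_mul_of_nonneg_left h1 hbb.le
    _ = b := mul_one b
  -- choose spectral points
  have hex : ∀ n : ℕ, ∃ s, 0 ≤ s ∧ s ≤ T ∧ θ n ≤ φ s ∧ (s = 0 ∨ φ s = θ n) := by
    intro n
    by_cases h : θ n ≤ φ 0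
    · exact ⟨0, le_rfl, hT0, h, Or.inl rfl⟩
    · push_neg at h
      have hsub : Set.Icc (0:ℝ) T ⊆ Set.Ici 0 := fun x hx => hx.1
      have hIVT := intermediate_value_Icc hT0 (hφcont.mono hsub)
      obtain ⟨s, hs, hφs⟩ := hIVT ⟨h.le, hθleb n⟩
      exact ⟨s, hs.1, hs.2, hφs.ge, Or.inr hφs⟩
  choose t ht0 htT htlb htc using hex
  have htmono : ∀ n, t (n + 1) ≤ t n := by
    intro n
    rcases htc (n + 1) with h0 | heq
    · rw [h0]; exact ht0 n
    · by_contra hlt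
      push_neg at hlt
      have hm := hφmono (Set.mem_Ici.mpr (ht0 n)) (Set.mem_Ici.mpr (ht0 (n + 1))) hlt.le
      rw [heq] at hm
      have h2 := htlb n
      linarith [hθlt n]
  set τ : ℕ → ℝ := fun n => Nat.casesOn n T t with hτdef
  have hτ0 : ∀ n, 0 ≤ τ n := by intro n; cases n; exacts [hT0, ht0 _]
  have hτmono : ∀ n, τ (n + 1) ≤ τ n := by intro n; cases n; exacts [htT 0, htmono _]
  have hφτ : ∀ n, θ n ≤ φ (τ (n + 1)) := fun n => htlb n
  set K : ℕ → ℝ := fun n => Nat.casesOn n ‖xdag‖ (fun m => C * θ m ^ ν) with hKdef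
  have hK1 : ∀ m, K (m + 1) = C * θ m ^ ν := fun m => rfl
  have hKnn : ∀ n, 0 ≤ K n := by
    intro n
    cases n with
    | zero => exact norm_nonneg _
    | succ m => rw [hK1]; exact mul_nonneg hC.le (Real.rpow_nonneg (hθpos m).le ν)
  have hK : ∀ n, ‖E (τ n) xdag‖ ≤ K n := by
    intro n
    cases n with
    | zero => rw [show τ 0 = T from rfl, hETdag]; exact le_rfl
    | succ m =>
      rcases htc m with h0 | heq
      · rw [show τ (m + 1) = t m from rfl, h0, hE0dag, norm_zero]; exact hKnn (m + 1)
      · have h := hkey (t m) (ht0 m)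
        rw [heq] at h
        exact h
  -- solve on slices
  have hslice : ∀ n : ℕ, ∃ wn : X, Aψ wn = E (τ n) xdag - E (τ (n + 1)) xdag ∧
      c * θ n ^ μ * ‖wn‖ ≤ ‖E (τ n) xdag - E (τ (n + 1)) xdag‖ := by
    intro n
    have hs0 : 0 ≤ τ (n + 1) := hτ0 (n + 1)
    have hst : τ (n + 1) ≤ τ n := hτmono n
    set P : X →L[ℝ] X := E (τ n) - E (τ (n + 1)) with hPdef
    have hPapp : ∀ u, P u = E (τ n) u - E (τ (n + 1)) u := fun u => rfl
    have hP2 : ∀ u, P (P u) = P u := by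
      intro u
      simp only [hPapp, map_sub]
      rw [hEcomp (τ n) (τ n), hEcomp (τ n) (τ (n+1)), hEcomp (τ (n+1)) (τ n),
        hEcomp (τ (n+1)) (τ (n+1)), min_self, min_eq_right hst, min_eq_left hst, min_self]
      abel
    have hcomm' : ∀ u, Aψ (P u) = P (Aψ u) := by
      intro u
      simp only [hPapp]
      rw [map_sub, hAψcomm, hAψcomm]
    have hc' : 0 < c * θ n ^ μ := mul_pos hc (Real.rpow_pos_of_pos (hθpos n) μ)
    have hinf : ∀ u ∈ Set.Icc (τ (n + 1)) (τ n), c * θ n ^ μ ≤ ψ u := by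
      intro u hu
      have hu0 : 0 ≤ u := le_trans hs0 hu.1
      have hφu : θ n ≤ φ u :=
        le_trans (hφτ n) (hφmono (Set.mem_Ici.mpr hs0) (Set.mem_Ici.mpr hu0) hu.1)
      have h1 : θ n ^ μ ≤ φ u ^ μ := Real.rpow_le_rpow (hθpos n).le hφu hμ0.le
      calc c * θ n ^ μ ≤ c * φ u ^ μ := mul_le_mul_of_nonneg_left h1 hc.le
      _ ≤ ψ u := hψφ u (Set.mem_Ici.mpr hu0)
    have hlb : ∀ u : X, P u = u → c * θ n ^ μ * ‖u‖ ≤ ‖Aψ u‖ := by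
      intro u hu
      have h := hAψlb (τ (n + 1)) (τ n) hs0 hst (c * θ n ^ μ) hinf u
      rw [show E (τ n) u - E (τ (n + 1)) u = P u from rfl, hu] at h
      exact h
    have hv : P (E (τ n) xdag - E (τ (n + 1)) xdag) = E (τ n) xdag - E (τ (n + 1)) xdag := by
      have h := hP2 xdag
      rw [show P xdag = E (τ n) xdag - E (τ (n + 1)) xdag from rfl] at h
      exact h
    obtain ⟨w, hw1, hw2⟩ := slice_solve P Aψ hcomm' hAψsa _ hc' hlb _ hv
    exact ⟨w, hw1, hw2⟩
  choose w hw1 hw2 using hslice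
  have hwb : ∀ n, ‖w n‖ ≤ (c * θ n ^ μ)⁻¹ * (K n + K (n + 1)) := by
    intro n
    have hc' : 0 < c * θ n ^ μ := mul_pos hc (Real.rpow_pos_of_pos (hθpos n) μ)
    have h1 : ‖E (τ n) xdag - E (τ (n + 1)) xdag‖ ≤ K n + K (n + 1) :=
      le_trans (norm_sub_le _ _) (add_le_add (hK n) (hK (n + 1)))
    exact (le_inv_mul_iff₀ hc').mpr (le_trans (hw2 n) h1)
  -- geometric bound
  set α : ℝ := (2:ℝ)⁻¹ ^ μ with hαdef
  set β : ℝ := (2:ℝ)⁻¹ ^ ν with hβdef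
  have hαpos : 0 < α := Real.rpow_pos_of_pos (by norm_num) μ
  have hβpos : 0 < β := Real.rpow_pos_of_pos (by norm_num) ν
  have hβα : β < α := Real.rpow_lt_rpow_of_exponent_gt (by norm_num) (by norm_num) hμν
  set r : ℝ := β / α with hrdef
  have hr0 : 0 ≤ r := le_of_lt (div_pos hβpos hαpos)
  have hr1 : r < 1 := (div_lt_one hαpos).mpr hβα
  have hpowcast : ∀ (p : ℝ) (n : ℕ), ((2:ℝ)⁻¹ ^ n) ^ p = ((2:ℝ)⁻¹ ^ p) ^ n := by
    intro p n
    rw [← Real.rpow_natCast (2:ℝ)⁻¹ n, ← Real.rpow_mul (by norm_num), mul_comm,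
      Real.rpow_mul (by norm_num), Real.rpow_natCast]
  have hθμ : ∀ n, θ n ^ μ = b ^ μ * α ^ n := by
    intro n
    rw [show θ n = b * (2:ℝ)⁻¹ ^ n from rfl, Real.mul_rpow hbb.le (by positivity), hpowcast]
  have hθν : ∀ n, θ n ^ ν = b ^ ν * β ^ n := by
    intro n
    rw [show θ n = b * (2:ℝ)⁻¹ ^ n from rfl, Real.mul_rpow hbb.le (by positivity), hpowcast]
  set D : ℝ := (c * b ^ μ * α)⁻¹ * (C * b ^ ν * (1 + β)) with hDdef
  have hbμ : (0:ℝ) < b ^ μ := Real.rpow_pos_of_pos hbb μ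
  have hbν : (0:ℝ) < b ^ ν := Real.rpow_pos_of_pos hbb ν
  have hgeo : ∀ m : ℕ, ‖w (m + 1)‖ ≤ D * r ^ m := by
    intro m
    have h1 := hwb (m + 1)
    have heq : (c * θ (m + 1) ^ μ)⁻¹ * (K (m + 1) + K (m + 2)) = D * r ^ m := by
      rw [hK1, hK1, hθμ (m + 1), hθν m, hθν (m + 1), hDdef, hrdef]
      have hαm : (0:ℝ) < α ^ m := pow_pos hαpos m
      rw [div_pow]
      field_simp
      ring
    rw [← heq]
    exact h1
  have hsum1 : Summable (fun m : ℕ => D * r ^ m) :=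
    (summable_geometric_of_lt_one hr0 hr1).mul_left D
  have hsumw' : Summable (fun m : ℕ => ‖w (m + 1)‖) :=
    Summable.of_nonneg_of_le (fun m => norm_nonneg _) hgeo hsum1
  have hsumw : Summable (fun n : ℕ => ‖w n‖) := (summable_nat_add_iff 1).mp hsumw'
  have hSw : Summable w := hsumw.of_norm
  have hHS : HasSum (fun n => Aψ (w n)) (Aψ (∑' n, w n)) := hSw.hasSum.mapL Aψ
  have htel : ∀ n, (∑ i ∈ Finset.range n, Aψ (w i)) = xdag - E (τ n) xdag := by
    intro n
    rw [Finset.sum_congr rfl (fun i _ => hw1 i),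
      Finset.sum_range_sub' (fun i => E (τ i) xdag), show τ 0 = T from rfl, hETdag]
  have hβ1 : β < 1 := Real.rpow_lt_one (by norm_num) (by norm_num) hν0
  have hKlim : Tendsto K atTop (nhds 0) := by
    rw [← tendsto_add_atTop_iff_nat 1]
    have hfun : (fun n : ℕ => K (n + 1)) = fun n : ℕ => C * b ^ ν * β ^ n := by
      funext n; rw [hK1, hθν]; ring
    rw [hfun]
    have := tendsto_pow_atTop_nhds_zero_of_lt_one hβpos.le hβ1
    simpa using this.const_mul (C * b ^ ν)
  have hE0 : Tendsto (fun n => E (τ n) xdag) atTop (nhds 0) :=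
    squeeze_zero_norm hK hKlim
  have hlim : Tendsto (fun n => ∑ i ∈ Finset.range n, Aψ (w i)) atTop (nhds xdag) := by
    simp only [htel]
    have h : Tendsto (fun n : ℕ => xdag - E (τ n) xdag) atTop (nhds (xdag - 0)) :=
      Tendsto.sub tendsto_const_nhds hE0
    simpa using h
  exact ⟨∑' n, w n, tendsto_nhds_unique hHS.tendsto_sum_nat hlim⟩
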